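/- arXiv:1701.05783 — 3 statements merged into one kernel-verified Lean document; each statement's English description precedes it below -/
import Mathlib

section
/- The function I_{a3} = (x p_y − y p_x)^2 + 2 k_2 (y/x)^2 + 2 k_3 (x/y)^2 Poisson-commutes with the Euclidean Hamiltonian H_a = (1/2)(p_x^2+p_y^2) + (1/2)k_1(x^2+y^2) + k_2/x^2 + k_3/y^2 on the set where x ≠ 0 and y ≠ 0. -/
/-- Canonical Poisson bracket on phase space ℝ² × ℝ² with coordinates (x,y,pₓ,p_y). -/
noncomputable def pb (F G : ℝ → ℝ → ℝ → ℝ → ℝ) (x y px py : ℝ) : ℝ :=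
    deriv (fun t => F t y px py) x * deriv (fun t => G x y t py) px
  + deriv (fun t => F x t px py) y * deriv (fun t => G x y px t) py
  - deriv (fun t => F x y t py) px * deriv (fun t => G t y px py) x
  - deriv (fun t => F x y px t) py * deriv (fun t => G x t px py) y

theorem stmt_3 (k1 k2 k3 : ℝ) (x y px py : ℝ) (hx : x ≠ 0) (hy : y ≠ 0) :
    pb (fun x y px py =>
          (1/2)*(px^2 + py^2) + (1/2)*k1*(x^2+y^2) + k2/x^2 + k3/y^2)
       (fun x y px py =>
          (x*py - y*px)^2 + 2*k2*(y/x)^2 + 2*k3*(x/y)^2)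
       x y px py = 0 := by
  have e1 : deriv (fun t : ℝ => (1/2)*(px^2 + py^2) + (1/2)*k1*(t^2+y^2) + k2/t^2 + k3/y^2) x
      = k1*x - 2*k2/x^3 := by
    have h := (((((hasDerivAt_pow 2 x).add_const (y^2)).const_mul ((1:ℝ)/2*k1)).const_add
        ((1:ℝ)/2*(px^2+py^2))).add
        ((hasDerivAt_const x k2).div (hasDerivAt_pow 2 x) (pow_ne_zero 2 hx))).add_const (k3/y^2)
    erw [h.deriv]; push_cast; field_simp; ring
  have e2 : deriv (fun t : ℝ => (1/2)*(px^2 + py^2) + (1/2)*k1*(x^2+t^2) + k2/x^2 + k3/t^2) y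
      = k1*y - 2*k3/y^3 := by
    have h := ((((((hasDerivAt_pow 2 y).const_add (x^2)).const_mul ((1:ℝ)/2*k1)).const_add
        ((1:ℝ)/2*(px^2+py^2))).add_const (k2/x^2)).add
        ((hasDerivAt_const y k3).div (hasDerivAt_pow 2 y) (pow_ne_zero 2 hy)))
    erw [h.deriv]; push_cast; field_simp; ring
  have e3 : deriv (fun t : ℝ => (1/2)*(t^2 + py^2) + (1/2)*k1*(x^2+y^2) + k2/x^2 + k3/y^2) px
      = px := by
    have h := (((((hasDerivAt_pow 2 px).add_const (py^2)).const_mul ((1:ℝ)/2)).add_const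
        ((1:ℝ)/2*k1*(x^2+y^2))).add_const (k2/x^2)).add_const (k3/y^2)
    rw [h.deriv]; push_cast; ring
  have e4 : deriv (fun t : ℝ => (1/2)*(px^2 + t^2) + (1/2)*k1*(x^2+y^2) + k2/x^2 + k3/y^2) py
      = py := by
    have h := (((((hasDerivAt_pow 2 py).const_add (px^2)).const_mul ((1:ℝ)/2)).add_const
        ((1:ℝ)/2*k1*(x^2+y^2))).add_const (k2/x^2)).add_const (k3/y^2)
    rw [h.deriv]; push_cast; ring
  have f1 : deriv (fun t : ℝ => (t*py - y*px)^2 + 2*k2*(y/t)^2 + 2*k3*(t/y)^2) x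
      = 2*(x*py - y*px)*py - 4*k2*y^2/x^3 + 4*k3*x/y^2 := by
    have h := ((((((hasDerivAt_id x).const_mul py).sub_const (y*px)).pow 2).add
        ((((hasDerivAt_const x y).div (hasDerivAt_id x) hx).pow 2).const_mul (2*k2))).add
        (((((hasDerivAt_id x).const_mul ((1:ℝ)/y)).pow 2).const_mul (2*k3))))
    rw [(h.congr_of_eventuallyEq (Filter.Eventually.of_forall fun t => by
        simp only [id_eq, Pi.add_apply, Pi.sub_apply, Pi.mul_apply, Pi.div_apply, Pi.pow_apply]; ring)).deriv]
    simp only [id_eq, Pi.div_apply]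
    push_cast; field_simp; ring
  have f2 : deriv (fun t : ℝ => (x*py - t*px)^2 + 2*k2*(t/x)^2 + 2*k3*(x/t)^2) y
      = -2*(x*py - y*px)*px + 4*k2*y/x^2 - 4*k3*x^2/y^3 := by
    have h := ((((((hasDerivAt_id y).const_mul px).const_sub (x*py)).pow 2).add
        (((((hasDerivAt_id y).const_mul ((1:ℝ)/x)).pow 2).const_mul (2*k2)))).add
        ((((hasDerivAt_const y x).div (hasDerivAt_id y) hy).pow 2).const_mul (2*k3)))
    rw [(h.congr_of_eventuallyEq (Filter.Eventually.of_forall fun t => by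
        simp only [id_eq, Pi.add_apply, Pi.sub_apply, Pi.mul_apply, Pi.div_apply, Pi.pow_apply]; ring)).deriv]
    simp only [id_eq, Pi.div_apply]
    push_cast; field_simp; ring
  have f3 : deriv (fun t : ℝ => (x*py - y*t)^2 + 2*k2*(y/x)^2 + 2*k3*(x/y)^2) px
      = -2*(x*py - y*px)*y := by
    have h := ((((((hasDerivAt_id px).const_mul y).const_sub (x*py)).pow 2).add_const
        (2*k2*(y/x)^2)).add_const (2*k3*(x/y)^2))
    rw [(h.congr_of_eventuallyEq (Filter.Eventually.of_forall fun t => by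
        simp only [id_eq, Pi.add_apply, Pi.sub_apply, Pi.mul_apply, Pi.div_apply, Pi.pow_apply]; try ring)).deriv]
    simp only [id_eq]
    push_cast; try field_simp; try ring
  have f4 : deriv (fun t : ℝ => (x*t - y*px)^2 + 2*k2*(y/x)^2 + 2*k3*(x/y)^2) py
      = 2*(x*py - y*px)*x := by
    have h := ((((((hasDerivAt_id py).const_mul x).sub_const (y*px)).pow 2).add_const
        (2*k2*(y/x)^2)).add_const (2*k3*(x/y)^2))
    rw [(h.congr_of_eventuallyEq (Filter.Eventually.of_forall fun t => by
        simp only [id_eq, Pi.add_apply, Pi.sub_apply, Pi.mul_apply, Pi.div_apply, Pi.pow_apply]; try ring)).deriv]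
    simp only [id_eq]
    push_cast; try field_simp; try ring
  simp only [pb, e1, e2, e3, e4, f1, f2, f3, f4]
  field_simp
  ring
end

section
/- The function I_{b3} = (x p_y − y p_x) p_y − k_1 x y^2 + 2 k_2 x / y^2 − (k_3/2) y^2 Poisson-commutes with the Hamiltonian H_b = (1/2)(p_x^2+p_y^2) + (1/2)k_1(4x^2 + y^2) + k_2/y^2 + k_3 x on the set where y ≠ 0. -/
theorem stmt_4 (k1 k2 k3 : ℝ) (x y px py : ℝ) (hy : y ≠ 0) :
    pb (fun x y px py =>
          (1/2)*(px^2 + py^2) + (1/2)*k1*(4*x^2 + y^2) + k2/y^2 + k3*x)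
       (fun x y px py =>
          (x*py - y*px)*py - k1*x*y^2 + 2*k2*x/y^2 - (k3/2)*y^2)
       x y px py = 0 := by
  have hsq : HasDerivAt (fun t : ℝ => t^2) (2*y) y := by
    simpa using hasDerivAt_pow 2 y
  have hy2 : (y:ℝ)^2 ≠ 0 := pow_ne_zero 2 hy
  have hHx : HasDerivAt (fun t : ℝ =>
      (1/2)*(px^2 + py^2) + (1/2)*k1*(4*t^2 + y^2) + k2/y^2 + k3*t)
      (4*k1*x + k3) x := by
    have h : HasDerivAt (fun t : ℝ => t^2) (2*x) x := by
      simpa using hasDerivAt_pow 2 x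
    have := (((((h.const_mul (4:ℝ)).add_const (y^2)).const_mul ((1/2)*k1)).const_add
      ((1/2)*(px^2 + py^2))).add_const (k2/y^2)).add ((hasDerivAt_id x).const_mul k3)
    refine this.congr_deriv ?_
    ring
  have hHy : HasDerivAt (fun t : ℝ =>
      (1/2)*(px^2 + py^2) + (1/2)*k1*(4*x^2 + t^2) + k2/t^2 + k3*x)
      (k1*y - 2*k2*y/(y^2)^2) y := by
    have hdiv : HasDerivAt (fun t : ℝ => k2/t^2) (-(k2*(2*y))/(y^2)^2) y :=
      (hasDerivAt_const y k2).div hsq hy2 |>.congr_deriv (by ring)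
    have := ((((hsq.const_add (4*x^2)).const_mul ((1/2)*k1)).const_add
      ((1/2)*(px^2 + py^2))).add hdiv).add_const (k3*x)
    refine this.congr_deriv ?_
    ring
  have hHpx : HasDerivAt (fun t : ℝ =>
      (1/2)*(t^2 + py^2) + (1/2)*k1*(4*x^2 + y^2) + k2/y^2 + k3*x) px px := by
    have h : HasDerivAt (fun t : ℝ => t^2) (2*px) px := by
      simpa using hasDerivAt_pow 2 px
    have := ((((h.add_const (py^2)).const_mul ((1/2):ℝ)).add_const
      ((1/2)*k1*(4*x^2 + y^2))).add_const (k2/y^2)).add_const (k3*x)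
    refine this.congr_deriv ?_
    ring
  have hHpy : HasDerivAt (fun t : ℝ =>
      (1/2)*(px^2 + t^2) + (1/2)*k1*(4*x^2 + y^2) + k2/y^2 + k3*x) py py := by
    have h : HasDerivAt (fun t : ℝ => t^2) (2*py) py := by
      simpa using hasDerivAt_pow 2 py
    have := ((((h.const_add (px^2)).const_mul ((1/2):ℝ)).add_const
      ((1/2)*k1*(4*x^2 + y^2))).add_const (k2/y^2)).add_const (k3*x)
    refine this.congr_deriv ?_
    ring
  have hIx : HasDerivAt (fun t : ℝ =>
      (t*py - y*px)*py - k1*t*y^2 + 2*k2*t/y^2 - (k3/2)*y^2)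
      (py^2 - k1*y^2 + 2*k2/y^2) x := by
    have h1 : HasDerivAt (fun t : ℝ => (t*py - y*px)*py) (py*py) x := by
      have := (((hasDerivAt_id x).mul_const py).sub_const (y*px)).mul_const py
      refine this.congr_deriv ?_
      ring
    have h2 : HasDerivAt (fun t : ℝ => k1*t*y^2) (k1*y^2) x := by
      have := ((hasDerivAt_id x).const_mul k1).mul_const (y^2)
      simpa using this
    have h3 : HasDerivAt (fun t : ℝ => 2*k2*t/y^2) (2*k2/y^2) x := by
      have := (((hasDerivAt_id x).const_mul (2*k2)).div_const (y^2))
      refine this.congr_deriv ?_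
      ring
    have := ((h1.sub h2).add h3).sub_const ((k3/2)*y^2)
    refine this.congr_deriv ?_
    ring
  have hIy : HasDerivAt (fun t : ℝ =>
      (x*py - t*px)*py - k1*x*t^2 + 2*k2*x/t^2 - (k3/2)*t^2)
      (-(px*py) - 2*k1*x*y - (2*k2*x)*(2*y)/(y^2)^2 - k3*y) y := by
    have h1 : HasDerivAt (fun t : ℝ => (x*py - t*px)*py) (-(px*py)) y := by
      have := (((hasDerivAt_id y).mul_const px).const_sub (x*py)).mul_const py
      refine this.congr_deriv ?_
      ring
    have h2 : HasDerivAt (fun t : ℝ => k1*x*t^2) (k1*x*(2*y)) y :=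
      hsq.const_mul (k1*x)
    have h3 : HasDerivAt (fun t : ℝ => 2*k2*x/t^2)
        (-(2*k2*x*(2*y))/(y^2)^2) y :=
      (hasDerivAt_const y (2*k2*x)).div hsq hy2 |>.congr_deriv (by ring)
    have h4 : HasDerivAt (fun t : ℝ => (k3/2)*t^2) ((k3/2)*(2*y)) y :=
      hsq.const_mul (k3/2)
    have := ((h1.sub h2).add h3).sub h4
    refine this.congr_deriv ?_
    ring
  have hIpx : HasDerivAt (fun t : ℝ =>
      (x*py - y*t)*py - k1*x*y^2 + 2*k2*x/y^2 - (k3/2)*y^2) (-(y*py)) px := by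
    have h1 : HasDerivAt (fun t : ℝ => (x*py - y*t)*py) (-(y*py)) px := by
      have := (((hasDerivAt_id px).const_mul y).const_sub (x*py)).mul_const py
      refine this.congr_deriv ?_
      ring
    exact ((h1.sub_const (k1*x*y^2)).add_const (2*k2*x/y^2)).sub_const ((k3/2)*y^2)
  have hIpy : HasDerivAt (fun t : ℝ =>
      (x*t - y*px)*t - k1*x*y^2 + 2*k2*x/y^2 - (k3/2)*y^2)
      (2*x*py - y*px) py := by
    have h1 : HasDerivAt (fun t : ℝ => (x*t - y*px)*t) (2*x*py - y*px) py := by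
      have := (((hasDerivAt_id py).const_mul x).sub_const (y*px)).mul (hasDerivAt_id py)
      refine this.congr_deriv ?_
      simp
      ring
    exact ((h1.sub_const (k1*x*y^2)).add_const (2*k2*x/y^2)).sub_const ((k3/2)*y^2)
  simp only [pb, hHx.deriv, hHy.deriv, hHpx.deriv, hHpy.deriv,
    hIx.deriv, hIy.deriv, hIpx.deriv, hIpy.deriv]
  field_simp
  ring
end

section
/- The function I_{c3} = (x p_y − y p_x) p_y + k_1 x / √(x^2+y^2) + 2 k_2 x / y^2 + k_3 (2x^2+y^2)/(y^2 √(x^2+y^2)) Poisson-commutes with H_c = (1/2)(p_x^2+p_y^2) + k_1/√(x^2+y^2) + k_2/y^2 + k_3 x/(y^2 √(x^2+y^2)) on the set where y ≠ 0 (hence x^2+y^2 > 0). -/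
set_option maxHeartbeats 1000000


private lemma sqrtL (a b : ℝ) (h : a^2+b^2 ≠ 0) :
    HasDerivAt (fun t : ℝ => Real.sqrt (t^2+b^2)) (a / Real.sqrt (a^2+b^2)) a := by
  have hpos : 0 < a^2+b^2 := lt_of_le_of_ne (by positivity) (Ne.symm h)
  have hs : Real.sqrt (a^2+b^2) ≠ 0 := by positivity
  have h1 : HasDerivAt (fun t : ℝ => t^2+b^2) (2*a) a := by
    simpa using (hasDerivAt_pow 2 a).add_const (b^2)
  have := (Real.hasDerivAt_sqrt h).comp a h1
  refine this.congr_deriv (Eq.symm ?_)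
  field_simp

private lemma sqrtR (a b : ℝ) (h : a^2+b^2 ≠ 0) :
    HasDerivAt (fun t : ℝ => Real.sqrt (a^2+t^2)) (b / Real.sqrt (a^2+b^2)) b := by
  have hpos : 0 < a^2+b^2 := lt_of_le_of_ne (by positivity) (Ne.symm h)
  have hs : Real.sqrt (a^2+b^2) ≠ 0 := by positivity
  have h1 : HasDerivAt (fun t : ℝ => a^2+t^2) (2*b) b := by
    simpa using (hasDerivAt_pow 2 b).const_add (a^2)
  have := (Real.hasDerivAt_sqrt h).comp b h1
  refine this.congr_deriv (Eq.symm ?_)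
  field_simp

theorem stmt_5 (k1 k2 k3 : ℝ) (x y px py : ℝ) (hy : y ≠ 0) :
    pb (fun x y px py =>
          (1/2)*(px^2 + py^2) + k1/Real.sqrt (x^2+y^2) + k2/y^2
            + k3*x/(y^2 * Real.sqrt (x^2+y^2)))
       (fun x y px py =>
          (x*py - y*px)*py + k1*x/Real.sqrt (x^2+y^2) + 2*k2*x/y^2
            + k3*(2*x^2+y^2)/(y^2 * Real.sqrt (x^2+y^2)))
       x y px py = 0 := by
  have hy2 : y^2 ≠ 0 := pow_ne_zero 2 hy
  have hR : (0:ℝ) < x^2+y^2 := by positivity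
  have hRne : x^2+y^2 ≠ 0 := ne_of_gt hR
  have hu0 : Real.sqrt (x^2+y^2) ≠ 0 := by positivity
  have hu2 : (Real.sqrt (x^2+y^2))^2 = x^2+y^2 := Real.sq_sqrt hR.le
  have hsx : HasDerivAt (fun t : ℝ => Real.sqrt (t^2+y^2))
      (x/Real.sqrt (x^2+y^2)) x := sqrtL x y hRne
  have hsy : HasDerivAt (fun t : ℝ => Real.sqrt (x^2+t^2))
      (y/Real.sqrt (x^2+y^2)) y := sqrtR x y hRne
  have hyu : y^2 * Real.sqrt (x^2+y^2) ≠ 0 := mul_ne_zero hy2 hu0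
  -- ∂H/∂x
  have hHx : HasDerivAt (fun t : ℝ => (1/2)*(px^2 + py^2) + k1/Real.sqrt (t^2+y^2) + k2/y^2
      + k3*t/(y^2 * Real.sqrt (t^2+y^2)))
      (-(k1*x)/(Real.sqrt (x^2+y^2))^3 + k3/(y^2*Real.sqrt (x^2+y^2))
        - k3*x^2/(y^2*(Real.sqrt (x^2+y^2))^3)) x := by
    have h2 := (hasDerivAt_const x k1).div hsx hu0
    have h4 := ((hasDerivAt_id x).const_mul k3).div (hsx.const_mul (y^2)) hyu
    have := (((hasDerivAt_const x ((1/2:ℝ)*(px^2+py^2))).add h2).add_const (k2/y^2)).add h4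
    refine this.congr_deriv (Eq.symm ?_)
    simp only [id_eq, Pi.mul_apply]
    field_simp
    linear_combination (0:ℝ) * hu2
  -- ∂H/∂y
  have hHy : HasDerivAt (fun t : ℝ => (1/2)*(px^2 + py^2) + k1/Real.sqrt (x^2+t^2) + k2/t^2
      + k3*x/(t^2 * Real.sqrt (x^2+t^2)))
      (-(k1*y)/(Real.sqrt (x^2+y^2))^3 - 2*k2/y^3 - 2*k3*x/(y^3*Real.sqrt (x^2+y^2))
        - k3*x/(y*(Real.sqrt (x^2+y^2))^3)) y := by
    have hp2 : HasDerivAt (fun t : ℝ => t^2) (2*y) y := by simpa using hasDerivAt_pow 2 y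
    have h2 := (hasDerivAt_const y k1).div hsy hu0
    have h3 := (hasDerivAt_const y k2).div hp2 hy2
    have h4 := (hasDerivAt_const y (k3*x)).div (hp2.mul hsy) hyu
    have := (((hasDerivAt_const y ((1/2:ℝ)*(px^2+py^2))).add h2).add h3).add h4
    refine this.congr_deriv (Eq.symm ?_)
    simp only [id_eq, Pi.mul_apply]
    field_simp
    linear_combination (0:ℝ) * hu2
  -- ∂H/∂px
  have hHpx : HasDerivAt (fun t : ℝ => (1/2)*(t^2 + py^2) + k1/Real.sqrt (x^2+y^2) + k2/y^2
      + k3*x/(y^2 * Real.sqrt (x^2+y^2))) px px := by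
    have := ((((hasDerivAt_pow 2 px).add_const (py^2)).const_mul
      ((1:ℝ)/2)).add_const (k1/Real.sqrt (x^2+y^2))).add_const (k2/y^2)
      |>.add_const (k3*x/(y^2 * Real.sqrt (x^2+y^2)))
    refine this.congr_deriv (Eq.symm ?_)
    push_cast
    ring
  -- ∂H/∂py
  have hHpy : HasDerivAt (fun t : ℝ => (1/2)*(px^2 + t^2) + k1/Real.sqrt (x^2+y^2) + k2/y^2
      + k3*x/(y^2 * Real.sqrt (x^2+y^2))) py py := by
    have := ((((hasDerivAt_pow 2 py).const_add (px^2)).const_mul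
      ((1:ℝ)/2)).add_const (k1/Real.sqrt (x^2+y^2))).add_const (k2/y^2)
      |>.add_const (k3*x/(y^2 * Real.sqrt (x^2+y^2)))
    refine this.congr_deriv (Eq.symm ?_)
    push_cast
    ring
  -- ∂I/∂x
  have hIx : HasDerivAt (fun t : ℝ => (t*py - y*px)*py + k1*t/Real.sqrt (t^2+y^2) + 2*k2*t/y^2
      + k3*(2*t^2+y^2)/(y^2 * Real.sqrt (t^2+y^2)))
      (py^2 + k1/Real.sqrt (x^2+y^2) - k1*x^2/(Real.sqrt (x^2+y^2))^3 + 2*k2/y^2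
        + 4*k3*x/(y^2*Real.sqrt (x^2+y^2))
        - k3*(2*x^2+y^2)*x/(y^2*(Real.sqrt (x^2+y^2))^3)) x := by
    have p1 := (((hasDerivAt_id x).mul_const py).sub_const (y*px)).mul_const py
    have p2 := ((hasDerivAt_id x).const_mul k1).div hsx hu0
    have p3 := ((hasDerivAt_id x).const_mul (2*k2)).div_const (y^2)
    have p4 := ((((hasDerivAt_pow 2 x).const_mul (2:ℝ)).add_const (y^2)).const_mul
      k3).div (hsx.const_mul (y^2)) hyu
    have := ((p1.add p2).add p3).add p4
    refine this.congr_deriv (Eq.symm ?_)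
    simp only [id_eq, Pi.mul_apply]
    field_simp
    linear_combination (0:ℝ) * hu2
  -- ∂I/∂y
  have hIy : HasDerivAt (fun t : ℝ => (x*py - t*px)*py + k1*x/Real.sqrt (x^2+t^2) + 2*k2*x/t^2
      + k3*(2*x^2+t^2)/(t^2 * Real.sqrt (x^2+t^2)))
      (-(px*py) - k1*x*y/(Real.sqrt (x^2+y^2))^3 - 4*k2*x/y^3
        + 2*k3/(y*Real.sqrt (x^2+y^2)) - 2*k3*(2*x^2+y^2)/(y^3*Real.sqrt (x^2+y^2))
        - k3*(2*x^2+y^2)/(y*(Real.sqrt (x^2+y^2))^3)) y := by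
    have hp2 : HasDerivAt (fun t : ℝ => t^2) (2*y) y := by simpa using hasDerivAt_pow 2 y
    have q1 := (((hasDerivAt_id y).mul_const px).const_sub (x*py)).mul_const py
    have q2 := (hasDerivAt_const y (k1*x)).div hsy hu0
    have q3 := (hasDerivAt_const y (2*k2*x)).div hp2 hy2
    have q4 := (((hasDerivAt_pow 2 y).const_add (2*x^2)).const_mul
      k3).div (hp2.mul hsy) hyu
    have := ((q1.add q2).add q3).add q4
    refine this.congr_deriv (Eq.symm ?_)
    simp only [id_eq, Pi.mul_apply]
    field_simp
    linear_combination (0:ℝ) * hu2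
  -- ∂I/∂px
  have hIpx : HasDerivAt (fun t : ℝ => (x*py - y*t)*py + k1*x/Real.sqrt (x^2+y^2) + 2*k2*x/y^2
      + k3*(2*x^2+y^2)/(y^2 * Real.sqrt (x^2+y^2))) (-(y*py)) px := by
    have := ((((hasDerivAt_id px).const_mul y).const_sub (x*py)).mul_const
      py).add_const (k1*x/Real.sqrt (x^2+y^2)) |>.add_const (2*k2*x/y^2)
      |>.add_const (k3*(2*x^2+y^2)/(y^2 * Real.sqrt (x^2+y^2)))
    refine this.congr_deriv (Eq.symm ?_)
    ring
  -- ∂I/∂py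
  have hIpy : HasDerivAt (fun t : ℝ => (x*t - y*px)*t + k1*x/Real.sqrt (x^2+y^2) + 2*k2*x/y^2
      + k3*(2*x^2+y^2)/(y^2 * Real.sqrt (x^2+y^2))) (2*x*py - y*px) py := by
    have := ((((hasDerivAt_id py).const_mul x).sub_const (y*px)).mul
      (hasDerivAt_id py)).add_const (k1*x/Real.sqrt (x^2+y^2)) |>.add_const (2*k2*x/y^2)
      |>.add_const (k3*(2*x^2+y^2)/(y^2 * Real.sqrt (x^2+y^2)))
    refine this.congr_deriv (Eq.symm ?_)
    simp only [id]
    ring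
  simp only [pb]
  rw [hHx.deriv, hHy.deriv, hHpx.deriv, hHpy.deriv, hIx.deriv, hIy.deriv,
    hIpx.deriv, hIpy.deriv]
  rw [show ((Real.sqrt (x^2+y^2))^3 = (x^2+y^2) * Real.sqrt (x^2+y^2)) by
    rw [pow_succ, hu2]]
  set u : ℝ := Real.sqrt (x^2+y^2) with hudef
  field_simp
  push_cast
  ring
end
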